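/- In a treelike model, the formula (□Kφ ∧ ◇L(ψ ∧ □φ)) → L(◇ψ ∧ □φ) is valid; that is, for every point x and subset U ∋ x, if x,U ⊨ □Kφ ∧ ◇L(ψ ∧ □φ) then x,U ⊨ L(◇ψ ∧ □φ). -/
import Mathlib

inductive Fml (α : Type) : Type
  | atom : α → Fml α
  | neg : Fml α → Fml α
  | and : Fml α → Fml α → Fml α
  | K : Fml α → Fml α
  | box : Fml α → Fml α

def Fml.imp {α : Type} (φ ψ : Fml α) : Fml α := (φ.and ψ.neg).neg
def Fml.or {α : Type} (φ ψ : Fml α) : Fml α := (φ.neg.and ψ.neg).neg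
def Fml.dia {α : Type} (φ : Fml α) : Fml α := φ.neg.box.neg
def Fml.L {α : Type} (φ : Fml α) : Fml α := φ.neg.K.neg

/-- Satisfaction in a subset model `⟨X, O, i⟩` at a pair `(x, U)`. -/
def Sat {X α : Type} (O : Set (Set X)) (i : α → Set X) : X → Set X → Fml α → Prop
  | x, _, .atom A => x ∈ i A
  | x, U, .neg φ => ¬ Sat O i x U φ
  | x, U, .and φ ψ => Sat O i x U φ ∧ Sat O i x U ψ
  | x, U, .K φ => ∀ y ∈ U, Sat O i y U φ
  | x, U, .box φ => ∀ V ∈ O, x ∈ V → V ⊆ U → Sat O i x V φ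

/-- A treelike space: `X ∈ O` and any two members of `O` are comparable or disjoint. -/
def Treelike {X : Type} (O : Set (Set X)) : Prop :=
  Set.univ ∈ O ∧ ∀ U ∈ O, ∀ V ∈ O, U ⊆ V ∨ V ⊆ U ∨ U ∩ V = ∅

/-- In a treelike model, `(□Kφ ∧ ◇L(ψ ∧ □φ)) → L(◇ψ ∧ □φ)` is valid. -/
theorem ntree_valid {X α : Type} (O : Set (Set X)) (i : α → Set X) (hT : Treelike O)
    (φ ψ : Fml α) (x : X) (U : Set X) (hU : U ∈ O) (hx : x ∈ U)
    (h : Sat O i x U ((φ.K.box).and (Fml.dia (Fml.L (ψ.and φ.box))))) :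
    Sat O i x U (Fml.L ((ψ.dia).and φ.box)) := by
  obtain ⟨hbox, hdia⟩ := h
  simp only [Fml.dia, Fml.L, Sat, not_forall, not_not, exists_prop] at hdia
  obtain ⟨V, hV, hxV, hVU, hL⟩ := hdia
  obtain ⟨y, hyV, hyψ, hybox⟩ := hL
  simp only [Fml.L, Sat, not_forall, not_not, exists_prop, Fml.dia]
  refine ⟨y, hVU hyV, ⟨V, hV, hyV, hVU, hyψ⟩, ?_⟩
  intro W hW hyW hWU
  rcases hT.2 W hW V hV with hWV | hVW | hdisj
  · exact hybox W hW hyW hWV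
  · exact hbox W hW (hVW hxV) hWU y hyW
  · exact absurd (hdisj ▸ (⟨hyW, hyV⟩ : y ∈ W ∩ V)) (Set.notMem_empty y)
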